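/- Let K = 2 and let α > 2. Then the infimum of 2·D_α(p‖q)/‖p−q‖₁² over all pairs p ≠ q in relint(Δ²) equals 2^{1−max{α,3}}; that is, it equals 1/4 for 2 < α ≤ 3 and 2^{1−α} for α > 3. In particular, 2^{1−max{α,3}} is the largest constant C ≥ 0 such that D_α(p‖q) ≥ (C/2)·‖p−q‖₁² holds for all p, q ∈ relint(Δ²). -/

import Mathlib

open Finset Real

/-- The α-Tsallis entropy on the positive orthant (Shannon for α = 1, Burg for α = 0). -/
noncomputable def tsallis (α : ℝ) {K : ℕ} (p : Fin K → ℝ) : ℝ :=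
  if α = 0 then ∑ k, Real.log (p k)
  else if α = 1 then -∑ k, p k * Real.log (p k)
  else (∑ k, p k ^ α) / (α * (1 - α))

/-- The gradient of the α-Tsallis entropy on the positive orthant. -/
noncomputable def tsallisGrad (α : ℝ) {K : ℕ} (q : Fin K → ℝ) (k : Fin K) : ℝ :=
  if α = 0 then 1 / q k
  else if α = 1 then -(1 + Real.log (q k))
  else -(q k ^ (α - 1)) / (α - 1)

/-- The Bregman divergence D_α of the negative α-Tsallis entropy:
`D_α(p‖q) = -S_α(p) + S_α(q) + ⟨∇S_α(q), p - q⟩`. -/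
noncomputable def breg (α : ℝ) {K : ℕ} (p q : Fin K → ℝ) : ℝ :=
  -tsallis α p + tsallis α q + ∑ k, tsallisGrad α q k * (p k - q k)

/-- The relative interior of the probability simplex Δ^K. -/
def relintSimplex (K : ℕ) : Set (Fin K → ℝ) :=
  {p | (∀ k, 0 < p k ∧ p k < 1) ∧ ∑ k, p k = 1}

/-- The ℓ¹ norm on ℝ^K. -/
noncomputable def l1 {K : ℕ} (x : Fin K → ℝ) : ℝ := ∑ k, |x k|

open Set

noncomputable def Phi (α t : ℝ) : ℝ := (t ^ α + (1-t) ^ α) / (α * (α - 1))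
noncomputable def Phi1 (α t : ℝ) : ℝ := (t ^ (α-1) - (1-t) ^ (α-1)) / (α - 1)
noncomputable def Phi2 (α t : ℝ) : ℝ := t ^ (α-2) + (1-t) ^ (α-2)
noncomputable def DD (α x y : ℝ) : ℝ := Phi α x - Phi α y - Phi1 α y * (x - y)

lemma hasDerivAt_Phi {α t : ℝ} (hα : 2 < α) (ht : t ∈ Ioo (0:ℝ) 1) :
    HasDerivAt (Phi α) (Phi1 α t) t := by
  have h1 : HasDerivAt (fun t : ℝ => t ^ α) (α * t ^ (α-1)) t :=
    Real.hasDerivAt_rpow_const (Or.inl (ne_of_gt ht.1))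
  have h2 : HasDerivAt (fun t : ℝ => (1-t) ^ α) (α * (1-t) ^ (α-1) * (-1)) t := by
    have := (Real.hasDerivAt_rpow_const (p := α)
      (Or.inl (ne_of_gt (by linarith [ht.2] : (0:ℝ) < 1 - t)))).comp t
      ((hasDerivAt_id t).const_sub 1)
    simpa [Function.comp_def] using this
  have h : HasDerivAt (Phi α) _ t := ((h1.add h2).div_const (α * (α - 1)))
  convert h using 1
  unfold Phi1
  have hα1 : α - 1 ≠ 0 := by linarith
  have hα0 : α ≠ 0 := by linarith
  field_simp
  ring

lemma hasDerivAt_Phi1 {α t : ℝ} (hα : 2 < α) (ht : t ∈ Ioo (0:ℝ) 1) :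
    HasDerivAt (Phi1 α) (Phi2 α t) t := by
  have h1 : HasDerivAt (fun t : ℝ => t ^ (α-1)) ((α-1) * t ^ (α-1-1)) t :=
    Real.hasDerivAt_rpow_const (Or.inl (ne_of_gt ht.1))
  have h2 : HasDerivAt (fun t : ℝ => (1-t) ^ (α-1)) ((α-1) * (1-t) ^ (α-1-1) * (-1)) t := by
    have := (Real.hasDerivAt_rpow_const (p := α-1)
      (Or.inl (ne_of_gt (by linarith [ht.2] : (0:ℝ) < 1 - t)))).comp t
      ((hasDerivAt_id t).const_sub 1)
    simpa [Function.comp_def] using this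
  have h : HasDerivAt (Phi1 α) _ t := ((h1.sub h2).div_const (α - 1))
  convert h using 1
  unfold Phi2
  have hα1 : α - 1 ≠ 0 := by linarith
  have he : α - 1 - 1 = α - 2 := by ring
  rw [he]
  field_simp
  ring

lemma tangent_le {a b : ℝ} {f u : ℝ → ℝ}
    (hd : ∀ t ∈ Ioo a b, HasDerivAt f (u t) t)
    (hu : MonotoneOn u (Ioo a b))
    {x y : ℝ} (hx : x ∈ Ioo a b) (hy : y ∈ Ioo a b) :
    f y + u y * (x - y) ≤ f x := by
  rcases lt_trichotomy x y with h | h | h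
  · have hsub : Icc x y ⊆ Ioo a b := Icc_subset_Ioo hx.1 hy.2
    have hcont : ContinuousOn f (Icc x y) := fun t ht =>
      ((hd t (hsub ht)).continuousAt).continuousWithinAt
    obtain ⟨c, hc, hceq⟩ := exists_hasDerivAt_eq_slope f u h hcont
      (fun t ht => hd t (hsub (Ioo_subset_Icc_self ht)))
    have hcy : u c ≤ u y := hu (hsub (Ioo_subset_Icc_self hc)) hy hc.2.le
    have hxy : (0:ℝ) < y - x := by linarith
    have : f y - f x = u c * (y - x) := by
      field_simp at hceq; linarith [hceq]
    nlinarith [mul_le_mul_of_nonneg_right hcy hxy.le]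
  · simp [h]
  · have hsub : Icc y x ⊆ Ioo a b := Icc_subset_Ioo hy.1 hx.2
    have hcont : ContinuousOn f (Icc y x) := fun t ht =>
      ((hd t (hsub ht)).continuousAt).continuousWithinAt
    obtain ⟨c, hc, hceq⟩ := exists_hasDerivAt_eq_slope f u h hcont
      (fun t ht => hd t (hsub (Ioo_subset_Icc_self ht)))
    have hcy : u y ≤ u c := hu hy (hsub (Ioo_subset_Icc_self hc)) hc.1.le
    have hxy : (0:ℝ) < x - y := by linarith
    have : f x - f y = u c * (x - y) := by
      field_simp at hceq; linarith [hceq]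
    nlinarith [mul_le_mul_of_nonneg_right hcy hxy.le]

lemma DD_bounds {α a b m M : ℝ} (hα : 2 < α) (hab : Ioo a b ⊆ Ioo (0:ℝ) 1)
    (hm : ∀ t ∈ Ioo a b, m ≤ Phi2 α t) (hM : ∀ t ∈ Ioo a b, Phi2 α t ≤ M)
    {x y : ℝ} (hx : x ∈ Ioo a b) (hy : y ∈ Ioo a b) :
    m / 2 * (x - y) ^ 2 ≤ DD α x y ∧ DD α x y ≤ M / 2 * (x - y) ^ 2 := by
  have hIconv : Convex ℝ (Ioo a b) := convex_Ioo a b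
  have hopen : interior (Ioo a b) = Ioo a b := (isOpen_Ioo).interior_eq
  constructor
  · set f : ℝ → ℝ := fun t => Phi α t - m/2 * (t-y)^2 with hf
    set u : ℝ → ℝ := fun t => Phi1 α t - m * (t-y) with huu
    have hd : ∀ t ∈ Ioo a b, HasDerivAt f (u t) t := by
      intro t ht
      have h1 := hasDerivAt_Phi hα (hab ht)
      have h2 : HasDerivAt (fun t : ℝ => m/2 * (t-y)^2) (m/2 * (2*(t-y))) t := by
        have : HasDerivAt (fun t : ℝ => (t-y)^2) (2*(t-y)) t := by
          simpa [Pi.pow_def] using (((hasDerivAt_id t).sub_const y).pow 2)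
        exact this.const_mul (m/2)
      have : HasDerivAt f _ t := h1.sub h2
      convert this using 1; ring
    have humono : MonotoneOn u (Ioo a b) := by
      apply monotoneOn_of_deriv_nonneg hIconv
      · intro t ht
        exact (((hasDerivAt_Phi1 hα (hab ht)).sub
          (((hasDerivAt_id t).sub_const y).const_mul m)).continuousAt).continuousWithinAt
      · rw [hopen]
        intro t ht
        exact (((hasDerivAt_Phi1 hα (hab ht)).sub
          (by simpa using (((hasDerivAt_id t).sub_const y).const_mul m) :
            HasDerivAt (fun t : ℝ => m * (t-y)) m t)).differentiableAt).differentiableWithinAt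
      · rw [hopen]
        intro t ht
        have hder : deriv u t = Phi2 α t - m := by
          have : HasDerivAt u (Phi2 α t - m) t := by
            have h2 : HasDerivAt (fun t : ℝ => m * (t-y)) m t := by
              simpa using (((hasDerivAt_id t).sub_const y).const_mul m)
            exact (hasDerivAt_Phi1 hα (hab ht)).sub h2
          exact this.deriv
        rw [hder]
        have := hm t ht
        linarith
    have := tangent_le hd humono hx hy
    simp only [hf, huu] at this
    unfold DD
    nlinarith [this]
  · set f : ℝ → ℝ := fun t => M/2 * (t-y)^2 - Phi α t with hf
    set u : ℝ → ℝ := fun t => M * (t-y) - Phi1 α t with huu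
    have hd : ∀ t ∈ Ioo a b, HasDerivAt f (u t) t := by
      intro t ht
      have h1 := hasDerivAt_Phi hα (hab ht)
      have h2 : HasDerivAt (fun t : ℝ => M/2 * (t-y)^2) (M/2 * (2*(t-y))) t := by
        have : HasDerivAt (fun t : ℝ => (t-y)^2) (2*(t-y)) t := by
          simpa [Pi.pow_def] using (((hasDerivAt_id t).sub_const y).pow 2)
        exact this.const_mul (M/2)
      have : HasDerivAt f _ t := h2.sub h1
      convert this using 1; ring
    have humono : MonotoneOn u (Ioo a b) := by
      apply monotoneOn_of_deriv_nonneg hIconv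
      · intro t ht
        exact ((((((hasDerivAt_id t).sub_const y).const_mul M)).sub
          (hasDerivAt_Phi1 hα (hab ht))).continuousAt).continuousWithinAt
      · rw [hopen]
        intro t ht
        exact ((((((hasDerivAt_id t).sub_const y).const_mul M)).sub
          (hasDerivAt_Phi1 hα (hab ht))).differentiableAt).differentiableWithinAt
      · rw [hopen]
        intro t ht
        have hder : deriv u t = M - Phi2 α t := by
          have : HasDerivAt u (M - Phi2 α t) t := by
            have h2 : HasDerivAt (fun t : ℝ => M * (t-y)) M t := by
              simpa using (((hasDerivAt_id t).sub_const y).const_mul M)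
            exact h2.sub (hasDerivAt_Phi1 hα (hab ht))
          exact this.deriv
        rw [hder]
        have := hM t ht
        linarith
    have := tangent_le hd humono hx hy
    simp only [hf, huu] at this
    unfold DD
    nlinarith [this]

lemma Phi2_ge {α t : ℝ} (hα : 2 < α) (ht : t ∈ Ioo (0:ℝ) 1) :
    (2:ℝ) ^ ((3:ℝ) - max α 3) ≤ Phi2 α t := by
  have h1t : (0:ℝ) < 1 - t := by linarith [ht.2]
  rcases le_or_gt α 3 with h3 | h3
  · rw [max_eq_right h3]
    have h0 : (2:ℝ) ^ ((3:ℝ) - 3) = 1 := by norm_num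
    rw [h0]
    have e1 : t ^ (1:ℝ) ≤ t ^ (α - 2) :=
      Real.rpow_le_rpow_of_exponent_ge ht.1 ht.2.le (by linarith)
    have e2 : (1-t) ^ (1:ℝ) ≤ (1-t) ^ (α - 2) :=
      Real.rpow_le_rpow_of_exponent_ge h1t (by linarith [ht.1]) (by linarith)
    rw [Real.rpow_one] at e1 e2
    unfold Phi2; linarith
  · rw [max_eq_left h3.le]
    have hconv : ConvexOn ℝ (Ici 0) fun x : ℝ => x ^ (α - 2) :=
      convexOn_rpow (by linarith)
    have hcv := hconv.2 (mem_Ici.2 ht.1.le) (mem_Ici.2 h1t.le)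
      (by norm_num : (0:ℝ) ≤ 1/2) (by norm_num : (0:ℝ) ≤ 1/2) (by norm_num)
    simp only [smul_eq_mul] at hcv
    have hmid : (1/2 : ℝ) * t + (1/2) * (1-t) = 1/2 := by ring
    rw [hmid] at hcv
    have hhalf : ((1:ℝ)/2) ^ (α - 2) = (2:ℝ) ^ ((2:ℝ) - α) := by
      rw [show ((1:ℝ)/2) = (2:ℝ)⁻¹ by norm_num,
        Real.inv_rpow (by norm_num), ← Real.rpow_neg (by norm_num)]
      norm_num
    rw [hhalf] at hcv
    have hfin : (2:ℝ) ^ ((3:ℝ) - α) = 2 * (2:ℝ) ^ ((2:ℝ) - α) := by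
      rw [show (3:ℝ) - α = 1 + (2 - α) by ring, Real.rpow_add (by norm_num),
        Real.rpow_one]
    rw [hfin]
    unfold Phi2; linarith

lemma Phi2_le_two {α t : ℝ} (hα : 2 < α) (ht : t ∈ Ioo (0:ℝ) 1) :
    Phi2 α t ≤ 2 := by
  have h1t : (0:ℝ) < 1 - t := by linarith [ht.2]
  have e1 : t ^ (α-2) ≤ 1 :=
    Real.rpow_le_one ht.1.le ht.2.le (by linarith)
  have e2 : (1-t) ^ (α-2) ≤ 1 :=
    Real.rpow_le_one h1t.le (by linarith [ht.1]) (by linarith)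
  unfold Phi2; linarith

lemma Phi2_half {α : ℝ} : Phi2 α (1/2) = (2:ℝ) ^ ((3:ℝ) - α) := by
  unfold Phi2
  norm_num
  rw [show ((1:ℝ)/2) = (2:ℝ)⁻¹ by norm_num,
    Real.inv_rpow (by norm_num), ← Real.rpow_neg (by norm_num),
    show (3:ℝ) - α = 1 + -(α - 2) by ring, Real.rpow_add (by norm_num), Real.rpow_one]
  ring

lemma Phi2_continuousAt {α t : ℝ} (ht : t ∈ Ioo (0:ℝ) 1) :
    ContinuousAt (Phi2 α) t := by
  have h1 : ContinuousAt (fun t : ℝ => t ^ (α-2)) t :=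
    Real.continuousAt_rpow_const t (α-2) (Or.inl (ne_of_gt ht.1))
  have h2 : ContinuousAt (fun t : ℝ => (1-t) ^ (α-2)) t := by
    have := (Real.continuousAt_rpow_const (1-t) (α-2)
      (Or.inl (ne_of_gt (by linarith [ht.2] : (0:ℝ) < 1 - t)))).comp
      (by fun_prop : ContinuousAt (fun t : ℝ => 1 - t) t)
    exact this
  exact h1.add h2

lemma Phi2_approx {α : ℝ} (hα : 2 < α) {ε : ℝ} (hε : 0 < ε) :
    ∃ y ∈ Ioo (0:ℝ) 1, Phi2 α y < (2:ℝ) ^ ((3:ℝ) - max α 3) + ε := by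
  rcases le_or_gt α 3 with h3 | h3
  · rw [max_eq_right h3]
    have h2 : (0:ℝ) < α - 2 := by linarith
    set y : ℝ := min (1/2) ((min ε 1) ^ (α-2)⁻¹) with hy
    have hε1 : (0:ℝ) < min ε 1 := lt_min hε one_pos
    have hpowpos : (0:ℝ) < (min ε 1) ^ (α-2)⁻¹ := Real.rpow_pos_of_pos hε1 _
    have hy0 : 0 < y := lt_min (by norm_num) hpowpos
    have hy1 : y < 1 := lt_of_le_of_lt (min_le_left _ _) (by norm_num)
    refine ⟨y, ⟨hy0, hy1⟩, ?_⟩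
    have e1 : y ^ (α-2) ≤ ε := by
      calc y ^ (α-2) ≤ ((min ε 1) ^ (α-2)⁻¹) ^ (α-2) :=
            Real.rpow_le_rpow hy0.le (min_le_right _ _) h2.le
        _ = min ε 1 := by
            rw [← Real.rpow_mul hε1.le, inv_mul_cancel₀ h2.ne', Real.rpow_one]
        _ ≤ ε := min_le_left _ _
    have e2 : (1-y) ^ (α-2) < 1 :=
      Real.rpow_lt_one (by linarith) (by linarith) h2
    have h0 : (2:ℝ) ^ ((3:ℝ) - 3) = 1 := by norm_num
    rw [h0]
    unfold Phi2
    linarith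
  · rw [max_eq_left h3.le]
    exact ⟨1/2, by norm_num, by rw [Phi2_half]; linarith⟩

lemma mem_relint {x : ℝ} (hx : x ∈ Ioo (0:ℝ) 1) : ![x, 1-x] ∈ relintSimplex 2 := by
  constructor
  · intro k
    fin_cases k
    · simpa using hx
    · show 0 < 1 - x ∧ 1 - x < 1
      constructor <;> linarith [hx.1, hx.2]
  · simp [Fin.sum_univ_two]

lemma relint_snd {p : Fin 2 → ℝ} (hp : p ∈ relintSimplex 2) : p 1 = 1 - p 0 := by
  have := hp.2
  rw [Fin.sum_univ_two] at this
  linarith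

lemma breg_eq {α : ℝ} (hα : 2 < α) {p q : Fin 2 → ℝ}
    (hp : p ∈ relintSimplex 2) (hq : q ∈ relintSimplex 2) :
    breg α p q = DD α (p 0) (q 0) := by
  have h0 : α ≠ 0 := by linarith
  have h1 : α ≠ 1 := by linarith
  have hp1 := relint_snd hp
  have hq1 := relint_snd hq
  unfold breg tsallis tsallisGrad DD Phi Phi1
  rw [if_neg h0, if_neg h1, if_neg h0, if_neg h1]
  simp only [if_neg h0, if_neg h1, Fin.sum_univ_two]
  rw [hp1, hq1]
  have hα1 : α - 1 ≠ 0 := by intro h; apply h1; linarith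
  have h1α : 1 - α ≠ 0 := by intro h; apply h1; linarith
  field_simp
  ring

lemma l1_eq {p q : Fin 2 → ℝ} (hp : p ∈ relintSimplex 2) (hq : q ∈ relintSimplex 2) :
    l1 (p - q) = 2 * |p 0 - q 0| := by
  have hp1 := relint_snd hp
  have hq1 := relint_snd hq
  unfold l1
  rw [Fin.sum_univ_two]
  simp only [Pi.sub_apply, hp1, hq1]
  rw [show (1 - p 0) - (1 - q 0) = -(p 0 - q 0) by ring, abs_neg]
  ring

lemma ne_iff_fst {p q : Fin 2 → ℝ} (hp : p ∈ relintSimplex 2) (hq : q ∈ relintSimplex 2) :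
    p ≠ q ↔ p 0 ≠ q 0 := by
  constructor
  · intro h hc
    apply h
    funext k
    fin_cases k
    · exact hc
    · show p 1 = q 1
      rw [relint_snd hp, relint_snd hq, hc]
  · intro h hc; exact h (by rw [hc])

theorem pinsker_tsallis_binary_alpha_gt_two (α : ℝ) (hα : 2 < α) :
    sInf {r : ℝ | ∃ p ∈ relintSimplex 2, ∃ q ∈ relintSimplex 2,
        p ≠ q ∧ r = 2 * breg α p q / (l1 (p - q)) ^ 2} = (2 : ℝ) ^ (1 - max α 3) ∧
    (α ≤ 3 → (2 : ℝ) ^ (1 - max α 3) = 1 / 4) ∧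
    (3 < α → (2 : ℝ) ^ (1 - max α 3) = (2 : ℝ) ^ (1 - α)) ∧
    IsGreatest {C : ℝ | 0 ≤ C ∧ ∀ p ∈ relintSimplex 2, ∀ q ∈ relintSimplex 2,
        breg α p q ≥ C / 2 * (l1 (p - q)) ^ 2} ((2 : ℝ) ^ (1 - max α 3)) := by
  set c : ℝ := (2 : ℝ) ^ (1 - max α 3) with hc
  set m : ℝ := (2 : ℝ) ^ ((3:ℝ) - max α 3) with hm
  have hmc : m = 4 * c := by
    rw [hm, hc, show (3:ℝ) - max α 3 = 2 + (1 - max α 3) by ring,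
      Real.rpow_add (by norm_num)]
    norm_num
  set S : Set ℝ := {r : ℝ | ∃ p ∈ relintSimplex 2, ∃ q ∈ relintSimplex 2,
        p ≠ q ∧ r = 2 * breg α p q / (l1 (p - q)) ^ 2} with hS
  -- characterization of S
  have hS_iff : ∀ r : ℝ, r ∈ S ↔ ∃ x ∈ Ioo (0:ℝ) 1, ∃ y ∈ Ioo (0:ℝ) 1,
      x ≠ y ∧ r = DD α x y / (2 * (x - y) ^ 2) := by
    intro r
    constructor
    · rintro ⟨p, hp, q, hq, hpq, hr⟩
      refine ⟨p 0, (hp.1 0), q 0, (hq.1 0), (ne_iff_fst hp hq).1 hpq, ?_⟩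
      have hne : p 0 - q 0 ≠ 0 := sub_ne_zero.2 ((ne_iff_fst hp hq).1 hpq)
      rw [hr, breg_eq hα hp hq, l1_eq hp hq, mul_pow, sq_abs]
      rw [div_eq_div_iff (by positivity) (by positivity)]
      ring
    · rintro ⟨x, hx, y, hy, hxy, hr⟩
      have hpm := mem_relint hx
      have hqm := mem_relint hy
      refine ⟨![x, 1-x], hpm, ![y, 1-y], hqm, ?_, ?_⟩
      · rw [ne_iff_fst hpm hqm]
        simpa using hxy
      · have hne : x - y ≠ 0 := sub_ne_zero.2 hxy
        rw [hr, breg_eq hα hpm hqm, l1_eq hpm hqm]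
        simp only [Matrix.cons_val_zero]
        rw [mul_pow, sq_abs]
        rw [div_eq_div_iff (by positivity) (by positivity)]
        ring
  -- lower bound on elements of S
  have hlow : ∀ r ∈ S, c ≤ r := by
    intro r hr
    obtain ⟨x, hx, y, hy, hxy, hr⟩ := (hS_iff r).1 hr
    have hDD := (DD_bounds hα (subset_refl _) (fun t ht => Phi2_ge hα ht)
      (fun t ht => Phi2_le_two hα ht) hx hy).1
    have hne : x - y ≠ 0 := sub_ne_zero.2 hxy
    have hd : (0:ℝ) < (x - y) ^ 2 := by positivity
    rw [hr, le_div_iff₀ (by linarith)]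
    nlinarith [hDD]
  -- S is nonempty
  have hSne : S.Nonempty := by
    refine ⟨DD α (1/3) (1/2) / (2 * ((1:ℝ)/3 - 1/2) ^ 2), ?_⟩
    rw [hS_iff]
    exact ⟨1/3, by norm_num, 1/2, by norm_num, by norm_num, rfl⟩
  have hSbdd : BddBelow S := ⟨c, hlow⟩
  -- approach: ∀ ε > 0, ∃ r ∈ S, r < c + ε
  have happrox : ∀ ε : ℝ, 0 < ε → ∃ r ∈ S, r < c + ε := by
    intro ε hε
    obtain ⟨y, hy, hyval⟩ := Phi2_approx hα (by linarith : (0:ℝ) < 2*ε)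
    have hcont := Phi2_continuousAt (α := α) hy
    rw [Metric.continuousAt_iff] at hcont
    obtain ⟨δ, hδ, hδprop⟩ := hcont ε hε
    set a : ℝ := max (y - δ) 0 with ha
    set b : ℝ := min (y + δ) 1 with hb
    have hyI : y ∈ Ioo a b :=
      ⟨max_lt (by linarith) hy.1, lt_min (by linarith) hy.2⟩
    have hsub : Ioo a b ⊆ Ioo (0:ℝ) 1 := fun t ht =>
      ⟨lt_of_le_of_lt (le_max_right _ _) ht.1, lt_of_lt_of_le ht.2 (min_le_right _ _)⟩
    have hM : ∀ t ∈ Ioo a b, Phi2 α t ≤ m + 3*ε := by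
      intro t ht
      have hdist : dist t y < δ := by
        rw [Real.dist_eq, abs_lt]
        have h1 : y - δ ≤ a := le_max_left _ _
        have h2 : b ≤ y + δ := min_le_left _ _
        constructor
        · linarith [ht.1]
        · linarith [ht.2]
      have := hδprop hdist
      rw [Real.dist_eq, abs_lt] at this
      linarith [this.1, this.2]
    obtain ⟨hya, hyb⟩ := hyI
    have hyI : y ∈ Ioo a b := ⟨hya, hyb⟩
    set x : ℝ := (y + b)/2 with hx
    have hyx : y < x := by rw [hx]; linarith
    have hxI : x ∈ Ioo a b := ⟨by linarith, by rw [hx]; linarith⟩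
    have hxy : x ≠ y := (ne_of_gt hyx)
    have hDD := (DD_bounds hα hsub (fun t ht => Phi2_ge hα (hsub ht)) hM hxI hyI).2
    refine ⟨DD α x y / (2 * (x - y) ^ 2), ?_, ?_⟩
    · rw [hS_iff]
      exact ⟨x, hsub hxI, y, hsub hyI, hxy, rfl⟩
    · have hd : (0:ℝ) < (x - y) ^ 2 := by
        have : x - y ≠ 0 := sub_ne_zero.2 hxy
        positivity
      rw [div_lt_iff₀ (by linarith)]
      nlinarith [hDD]
  -- sInf S = c
  have hsInf : sInf S = c := by
    apply le_antisymm
    · apply le_of_forall_pos_le_add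
      intro ε hε
      obtain ⟨r, hrS, hrlt⟩ := happrox ε hε
      exact le_trans (csInf_le hSbdd hrS) hrlt.le
    · exact le_csInf hSne hlow
  have hcpos : 0 < c := Real.rpow_pos_of_pos (by norm_num) _
  refine ⟨hsInf, ?_, ?_, ?_⟩
  · intro h3
    rw [hc, max_eq_right h3, show (1:ℝ) - 3 = -2 by norm_num,
      Real.rpow_neg (by norm_num), show ((2:ℝ))^(2:ℝ) = 4 by
        rw [show (2:ℝ) = ((2:ℕ):ℝ) by norm_num, Real.rpow_natCast]; norm_num]
    norm_num
  · intro h3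
    rw [hc, max_eq_left h3.le]
  · constructor
    · refine ⟨hcpos.le, ?_⟩
      intro p hp q hq
      rw [breg_eq hα hp hq, l1_eq hp hq, mul_pow, sq_abs]
      have hDD := (DD_bounds hα (subset_refl _) (fun t ht => Phi2_ge hα ht)
        (fun t ht => Phi2_le_two hα ht) (hp.1 0) (hq.1 0)).1
      nlinarith [hDD]
    · intro C hC
      rw [← hsInf]
      apply le_csInf hSne
      intro r hrS
      obtain ⟨p, hp, q, hq, hpq, hr⟩ := hrS
      have hB := hC.2 p hp q hq
      have hL : 0 < l1 (p - q) := by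
        rw [l1_eq hp hq]
        have : p 0 ≠ q 0 := (ne_iff_fst hp hq).1 hpq
        have := abs_pos.2 (sub_ne_zero.2 this)
        linarith
      rw [hr, le_div_iff₀ (by positivity)]
      nlinarith [hB, hL]
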